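/- Let q⋆ be an optimal k-points NN quantizer for P with codebook c⋆ = {c⋆₁,…,c⋆_k} and let q be a k-points NN quantizer with codebook c = {c₁,…,c_k}. Set m = min_{i≠j} |c⋆_i − c⋆_j|. Assume that the identity permutation attains the minimum in the definition of F₁(q⋆,q) and that F₁(q⋆,q) ≤ m. Then 𝐅(q⋆,q)² ≥ F₂(q⋆,q)·(m − F₁(q⋆,q))². -/

import Mathlib

open MeasureTheory Metric Set ENNReal

noncomputable section

variable {E : Type*} [NormedAddCommGroup E] [InnerProductSpace ℝ E] [MeasurableSpace E]

/-- A `k`-points nearest-neighbor quantizer: a Borel-measurable map whose image is a set of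
exactly `k` points and which maps every point to a nearest point of its codebook. -/
def IsNNQuantizer (k : ℕ) (q : E → E) : Prop :=
  Measurable q ∧ (∃ s : Finset E, s.card = k ∧ Set.range q = ↑s) ∧
    ∀ x : E, ∀ c ∈ Set.range q, ‖x - q x‖ ≤ ‖x - c‖

/-- The risk (distortion) of a quantizer with respect to `P`. -/
def risk (P : Measure E) (q : E → E) : ℝ := ∫ x, ‖x - q x‖ ^ 2 ∂P

/-- An optimal `k`-points NN quantizer for `P`. -/
def IsOptimalQuantizer (P : Measure E) (k : ℕ) (q : E → E) : Prop :=
  IsNNQuantizer k q ∧ ∀ q', IsNNQuantizer k q' → risk P q ≤ risk P q'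

/-- The absolute margin condition with parameter `l0` (with respect to the optimal quantizer
`qs`):  (1) the set `A(l0)` has full `P`-measure; (2) for every random variable `Y`
(encoded by a coupling `π` of the law `P` of `X` and the law of `Y`) with
`E|X - Y|² ≤ l0² E|X - qs X|²`, the map `q ↦ E|Y - q Y|²` over `k`-points NN quantizers has a
unique minimizer (uniqueness of its codebook). -/
def AbsoluteMargin (P : Measure E) (k : ℕ) (qs : E → E) (l0 : ℝ) : Prop :=
  P {x | qs (x + l0 • (x - qs x)) = qs x} = 1 ∧
  ∀ π : Measure (E × E), IsProbabilityMeasure π → π.map Prod.fst = P →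
    (∫ p, ‖p.1 - p.2‖ ^ 2 ∂π) ≤ l0 ^ 2 * ∫ x, ‖x - qs x‖ ^ 2 ∂P →
    ∃ q0, IsNNQuantizer k q0 ∧
      (∀ q', IsNNQuantizer k q' → risk (π.map Prod.snd) q0 ≤ risk (π.map Prod.snd) q') ∧
      ∀ q', IsNNQuantizer k q' →
        (∀ q'', IsNNQuantizer k q'' → risk (π.map Prod.snd) q' ≤ risk (π.map Prod.snd) q'') →
        Set.range q' = Set.range q0

/-- Voronoi cell of the `j`-th point of the codebook `c`. -/
def Vcell (k : ℕ) (c : Fin k → E) (j : Fin k) : Set E := {x | ∀ l, ‖x - c j‖ ≤ ‖x - c l‖}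

/-- The frontier of the Voronoi diagram generated by `c`. -/
def VorFrontier (k : ℕ) (c : Fin k → E) : Set E :=
  ⋃ (i) (j) (_ : i ≠ j), Vcell k c i ∩ Vcell k c j

/-- `F₁` between two codebooks: min over permutations of the max distance of matched centers. -/
def F1 (k : ℕ) (c c' : Fin k → E) : ℝ :=
  ⨅ σ : Equiv.Perm (Fin k), ⨆ j, ‖c j - c' (σ j)‖

/-- `F₂` between two codebooks: the minimal `P`-mass of misclassified points. -/
def F2 (P : Measure E) (k : ℕ) (c c' : Fin k → E) : ℝ :=
  ⨅ σ : Equiv.Perm (Fin k), (P (⋃ j, Vcell k c j ∩ Vcell k c' (σ j))ᶜ).toReal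

/-- `max_{i ≠ j} ‖c i - c j‖`. -/
def maxDist (k : ℕ) (c : Fin k → E) : ℝ :=
  ⨆ p : {p : Fin k × Fin k // p.1 ≠ p.2}, ‖c p.1.1 - c p.1.2‖

/-- `min_{i ≠ j} ‖c i - c j‖`. -/
def minDist (k : ℕ) (c : Fin k → E) : ℝ :=
  ⨅ p : {p : Fin k × Fin k // p.1 ≠ p.2}, ‖c p.1.1 - c p.1.2‖

/-- The function `p⋆(t)` of Definition `def:pstar`, for the optimal codebook `cs` of the
optimal quantizer `qs`. -/
def pstar (P : Measure E) (k : ℕ) (cs : Fin k → E) (qs : E → E) (t : ℝ) : ℝ :=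
  (P (⋃ i, {x | minDist k cs * infDist x (frontier (Vcell k cs i)) ≤
      2 * ‖x - qs x‖ * t + 2 * t ^ 2})).toReal

/-- `F₁` between two quantizers, defined through enumerations of their codebooks. -/
def F1Q (k : ℕ) (q q' : E → E) : ℝ :=
  sInf {r | ∃ c c' : Fin k → E, Set.range c = Set.range q ∧ Set.range c' = Set.range q' ∧
    r = ⨆ j, ‖c j - c' j‖}

/-- lower comparison of `𝐅²` with `F₂` (Subsection `sub:comp`). -/
theorem stmt8 [BorelSpace E] [CompleteSpace E] [SecondCountableTopology E]
    (P : Measure E) [IsProbabilityMeasure P] (k : ℕ) (hk : 1 ≤ k)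
    (hmom : Integrable (fun x => ‖x‖ ^ 2) P)
    (hsupp : ∀ s : Finset E, s.card ≤ k → P (↑s : Set E) < 1)
    (qs q : E → E) (cs c : Fin k → E)
    (hcs_inj : Function.Injective cs) (hc_inj : Function.Injective c)
    (hcs_range : Set.range qs = Set.range cs) (hc_range : Set.range q = Set.range c)
    (hqs : IsOptimalQuantizer P k qs) (hq : IsNNQuantizer k q)
    (hF1id : F1 k cs c = ⨆ j, ‖cs j - c j‖)
    (hF1m : F1 k cs c ≤ minDist k cs) :
    F2 P k cs c * (minDist k cs - F1 k cs c) ^ 2 ≤ ∫ x, ‖q x - qs x‖ ^ 2 ∂P := by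

  classical
  obtain ⟨hqmeas, ⟨sq, hsqcard, hsqrange⟩, hqnn⟩ := hq
  obtain ⟨⟨hqsmeas, ⟨ss, hsscard, hssrange⟩, hqsnn⟩, -⟩ := hqs
  set m := minDist k cs with hm
  set f1 := F1 k cs c with hf1
  have hm0 : 0 ≤ m - f1 := sub_nonneg.mpr hF1m
  set B : Set E := ⋃ j, Vcell k cs j ∩ Vcell k c j with hBdef
  have hVmeas : ∀ (d : Fin k → E) (j : Fin k), MeasurableSet (Vcell k d j) := by
    intro d j
    have hV : Vcell k d j = ⋂ l, {x : E | ‖x - d j‖ ≤ ‖x - d l‖} := by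
      ext x; simp [Vcell, Set.mem_iInter]
    rw [hV]
    exact MeasurableSet.iInter fun l =>
      (isClosed_le (by fun_prop) (by fun_prop)).measurableSet
  have hBmeas : MeasurableSet B :=
    MeasurableSet.iUnion fun j => (hVmeas cs j).inter (hVmeas c j)
  -- Step 1: F2 ≤ (P Bᶜ).toReal, using the identity permutation
  have hF2 : F2 P k cs c ≤ (P Bᶜ).toReal := by
    have hbdd : BddBelow (Set.range fun σ : Equiv.Perm (Fin k) =>
        (P (⋃ j, Vcell k cs j ∩ Vcell k c (σ j))ᶜ).toReal) :=
      ⟨0, by rintro _ ⟨σ, rfl⟩; exact ENNReal.toReal_nonneg⟩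
    have := ciInf_le hbdd (Equiv.refl (Fin k))
    simpa [F2, hBdef] using this
  -- Step 2: pointwise bound off B
  have hpt : ∀ x, x ∉ B → m - f1 ≤ ‖q x - qs x‖ := by
    intro x hx
    obtain ⟨i, hi⟩ : ∃ i, cs i = qs x := by
      have h1 : qs x ∈ Set.range cs := hcs_range ▸ ⟨x, rfl⟩
      exact h1
    obtain ⟨l, hl⟩ : ∃ l, c l = q x := by
      have h1 : q x ∈ Set.range c := hc_range ▸ ⟨x, rfl⟩
      exact h1
    have hxVi : x ∈ Vcell k cs i := by
      intro j
      rw [hi]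
      exact hqsnn x (cs j) (hcs_range ▸ Set.mem_range_self j)
    have hxVl : x ∈ Vcell k c l := by
      intro j
      rw [hl]
      exact hqnn x (c j) (hc_range ▸ Set.mem_range_self j)
    have hne : i ≠ l := by
      rintro rfl
      exact hx (Set.mem_iUnion.mpr ⟨i, hxVi, hxVl⟩)
    have hmle : m ≤ ‖cs i - cs l‖ := by
      have hbdd : BddBelow (Set.range fun p : {p : Fin k × Fin k // p.1 ≠ p.2} =>
          ‖cs p.1.1 - cs p.1.2‖) := ⟨0, by rintro _ ⟨p, rfl⟩; positivity⟩
      have := ciInf_le hbdd (⟨(i, l), hne⟩ : {p : Fin k × Fin k // p.1 ≠ p.2})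
      simpa [hm, minDist] using this
    have hf1ge : ‖cs l - c l‖ ≤ f1 := by
      rw [hF1id]
      exact le_ciSup (f := fun j => ‖cs j - c j‖) (Set.Finite.bddAbove (Set.finite_range _)) l
    have htri : ‖cs i - cs l‖ ≤ ‖cs i - c l‖ + ‖c l - cs l‖ := by
      have := dist_triangle (cs i) (c l) (cs l)
      simpa [dist_eq_norm] using this
    have hrev : ‖cs i - c l‖ = ‖c l - cs i‖ := norm_sub_rev _ _
    have hrev2 : ‖c l - cs l‖ = ‖cs l - c l‖ := norm_sub_rev _ _
    rw [← hi, ← hl]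
    linarith
  -- Integrability of the comparison function
  have hsqne : sq.Nonempty := Finset.card_pos.mp (by omega)
  have hssne : ss.Nonempty := Finset.card_pos.mp (by omega)
  set C : ℝ := sq.sup' hsqne (fun a => ‖a‖) + ss.sup' hssne (fun a => ‖a‖) with hC
  have hbound : ∀ x, ‖q x - qs x‖ ≤ C := by
    intro x
    have h1 : q x ∈ sq := by
      have : q x ∈ Set.range q := ⟨x, rfl⟩
      rwa [hsqrange] at this
    have h2 : qs x ∈ ss := by
      have : qs x ∈ Set.range qs := ⟨x, rfl⟩
      rwa [hssrange] at this
    calc ‖q x - qs x‖ ≤ ‖q x‖ + ‖qs x‖ := norm_sub_le _ _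
      _ ≤ C := add_le_add (Finset.le_sup' _ h1) (Finset.le_sup' _ h2)
  have hint : Integrable (fun x => ‖q x - qs x‖ ^ 2) P := by
    apply (integrable_const (C ^ 2)).mono'
    · exact ((hqmeas.sub hqsmeas).norm.pow_const 2).aestronglyMeasurable
    · filter_upwards with x
      rw [Real.norm_eq_abs, abs_of_nonneg (by positivity)]
      exact pow_le_pow_left₀ (norm_nonneg _) (hbound x) 2
  -- Step 3: integral comparison
  have key : ∫ x, Bᶜ.indicator (fun _ => (m - f1) ^ 2) x ∂P
      ≤ ∫ x, ‖q x - qs x‖ ^ 2 ∂P := by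
    apply integral_mono ((integrable_const _).indicator hBmeas.compl) hint
    intro x
    by_cases hx : x ∈ Bᶜ
    · rw [Set.indicator_of_mem hx]
      exact pow_le_pow_left₀ hm0 (hpt x hx) 2
    · rw [Set.indicator_of_notMem hx]
      positivity
  rw [integral_indicator_const _ hBmeas.compl, smul_eq_mul, measureReal_def] at key
  have hfin : F2 P k cs c * (m - f1) ^ 2 ≤ (P Bᶜ).toReal * (m - f1) ^ 2 :=
    mul_le_mul_of_nonneg_right hF2 (by positivity)
  linarith
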